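/- Formality is hereditary: if A is a formal central arrangement in V and Z ∈ L(A), then the restriction A^Z is a formal arrangement in Z. -/

import Mathlib

open Submodule

section ArrangementBasics

variable {𝕂 : Type*} [Field 𝕂] {V : Type*} [AddCommGroup V] [Module 𝕂 V]

/-- `H` is a (linear) hyperplane: the kernel of a nonzero linear form. -/
def IsHyperplane (H : Submodule 𝕂 V) : Prop :=
  ∃ f : Module.Dual 𝕂 V, f ≠ 0 ∧ LinearMap.ker f = H

/-- A central arrangement: a finite set of linear hyperplanes. -/
def IsArrangement (A : Set (Submodule 𝕂 V)) : Prop :=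
  A.Finite ∧ ∀ H ∈ A, IsHyperplane H

/-- The intersection lattice `L(A)`: all intersections of subsets of `A`
(with the ambient space `⊤ = sInf ∅` included). -/
def interLattice (A : Set (Submodule 𝕂 V)) : Set (Submodule 𝕂 V) :=
  {X | ∃ B ⊆ A, X = sInf B}

/-- The rank of an intersection: its codimension in the ambient space. -/
noncomputable def rk (X : Submodule 𝕂 V) : ℕ := Module.finrank 𝕂 (V ⧸ X)

/-- The localization `A_X` of `A` at `X`: all hyperplanes of `A` containing `X`. -/
def locz (A : Set (Submodule 𝕂 V)) (X : Submodule 𝕂 V) : Set (Submodule 𝕂 V) :=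
  {H | H ∈ A ∧ X ≤ H}

/-- The restriction `A^Z` of `A` to `Z`, an arrangement in (the vector space) `Z`:
the subspaces `Z ∩ H` for `H ∈ A ∖ A_Z`, viewed as submodules of `Z`. -/
def restr (A : Set (Submodule 𝕂 V)) (Z : Submodule 𝕂 V) : Set (Submodule 𝕂 ↥Z) :=
  {K | ∃ H ∈ A, ¬ Z ≤ H ∧ K = (Z ⊓ H).comap Z.subtype}

/-- `α` is a choice of defining linear forms for the arrangement `A`. -/
def IsDefiningForms (A : Set (Submodule 𝕂 V)) (α : Submodule 𝕂 V → Module.Dual 𝕂 V) : Prop :=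
  ∀ H ∈ A, LinearMap.ker (α H) = H

/-- The relation space `F(A)` with respect to the chosen defining forms `α`:
the kernel of `⊕_{H ∈ A} 𝕂·e_H → V*`, `e_H ↦ α_H`, realized as the space of finitely
supported coefficient functions supported on `A` whose linear combination vanishes. -/
noncomputable def relSpace (A : Set (Submodule 𝕂 V)) (α : Submodule 𝕂 V → Module.Dual 𝕂 V) :
    Submodule 𝕂 (Submodule 𝕂 V →₀ 𝕂) :=
  Finsupp.supported 𝕂 𝕂 A ⊓ LinearMap.ker (Finsupp.linearCombination 𝕂 α)

/-- `F_2(A)`: the span of the elements of `F(A)` of length at most `3`. -/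
noncomputable def relSpace2 (A : Set (Submodule 𝕂 V)) (α : Submodule 𝕂 V → Module.Dual 𝕂 V) :
    Submodule 𝕂 (Submodule 𝕂 V →₀ 𝕂) :=
  Submodule.span 𝕂 {c | c ∈ relSpace A α ∧ c.support.card ≤ 3}

/-- `A` is formal if `F_2(A) = F(A)` (for any choice of defining forms). -/
def IsFormal (A : Set (Submodule 𝕂 V)) : Prop :=
  ∀ α : Submodule 𝕂 V → Module.Dual 𝕂 V,
    IsDefiningForms A α → relSpace2 A α = relSpace A α

end ArrangementBasics


lemma aux_smul_of_ker_le {𝕂 : Type*} [Field 𝕂] {M : Type*} [AddCommGroup M] [Module 𝕂 M]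
    (f g : M →ₗ[𝕂] 𝕂) (hg : g ≠ 0) (h : LinearMap.ker g ≤ LinearMap.ker f) :
    ∃ a : 𝕂, f = a • g := by
  obtain ⟨z, hz⟩ : ∃ z, g z ≠ 0 := by
    by_contra h'
    push_neg at h'
    exact hg (LinearMap.ext fun x => h' x)
  refine ⟨f z / g z, LinearMap.ext fun v => ?_⟩
  have hv : v - (g v / g z) • z ∈ LinearMap.ker g := by
    simp only [LinearMap.mem_ker, map_sub, map_smul, smul_eq_mul]
    field_simp
    ring
  have hvf := h hv
  simp only [LinearMap.mem_ker, map_sub, map_smul, smul_eq_mul] at hvf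
  have hfv : f v = g v / g z * f z := sub_eq_zero.mp hvf
  simp only [LinearMap.smul_apply, smul_eq_mul, hfv]
  field_simp

lemma aux_ann_ker_le_span {𝕂 : Type*} [Field 𝕂] {M : Type*} [AddCommGroup M] [Module 𝕂 M]
    (f : M →ₗ[𝕂] 𝕂) (hf : f ≠ 0) :
    (LinearMap.ker f).dualAnnihilator ≤ Submodule.span 𝕂 {f} := by
  intro g hg
  rw [Submodule.mem_dualAnnihilator] at hg
  have hle : LinearMap.ker f ≤ LinearMap.ker g := fun x hx => hg x hx
  obtain ⟨a, rfl⟩ := aux_smul_of_ker_le g f hf hle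
  exact Submodule.smul_mem _ _ (Submodule.mem_span_singleton_self f)


set_option maxHeartbeats 2000000 in
/-- **Formality is hereditary** (Theorem 2 / `thm:restriction-formal`):
if `A` is a formal central arrangement in `V = 𝕂^ℓ` and `Z ∈ L(A)`,
then the restriction `A^Z` is a formal arrangement in `Z`. -/
theorem formality_is_hereditary {𝕂 : Type*} [Field 𝕂] {ℓ : ℕ}
    (A : Set (Submodule 𝕂 (Fin ℓ → 𝕂))) (hA : IsArrangement A) (hformal : IsFormal A)
    (Z : Submodule 𝕂 (Fin ℓ → 𝕂)) (hZ : Z ∈ interLattice A) :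
    IsFormal (restr A Z) := by
  classical
  obtain ⟨hAfin, hAhyp⟩ := hA
  obtain ⟨B, hBA, hZB⟩ := hZ
  intro β hβ
  set V := Fin ℓ → 𝕂 with hV
  -- choose defining forms for A
  have hchoice : ∀ H : Submodule 𝕂 V, ∃ f : Module.Dual 𝕂 V,
      H ∈ A → (f ≠ 0 ∧ LinearMap.ker f = H) := by
    intro H
    by_cases h : H ∈ A
    · obtain ⟨f, hf⟩ := hAhyp H h
      exact ⟨f, fun _ => hf⟩
    · exact ⟨0, fun h' => absurd h' h⟩
  choose α hα using hchoice
  have hαdef : IsDefiningForms A α := fun H hH => (hα H hH).2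
  -- the restriction map on hyperplanes
  set ρ : Submodule 𝕂 V → Submodule 𝕂 ↥Z := fun H => (Z ⊓ H).comap Z.subtype with hρ
  -- facts about restricted kernels
  have hkerres : ∀ H : Submodule 𝕂 V, H ∈ A →
      LinearMap.ker ((α H).comp Z.subtype) = ρ H := by
    intro H hH
    ext x
    simp only [LinearMap.mem_ker, LinearMap.coe_comp, Function.comp_apply, hρ,
      Submodule.mem_comap, Submodule.mem_inf, Submodule.coe_subtype]
    constructor
    · intro hx
      exact ⟨x.2, by rw [← hαdef H hH]; exact hx⟩
    · intro hx
      rw [← hαdef H hH] at hx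
      exact hx.2
  -- scalars relating restricted forms of A to the forms β of the restriction
  have hlamex : ∀ H : Submodule 𝕂 V, ∃ a : 𝕂,
      ((H ∈ A ∧ ¬ Z ≤ H) → ((α H).comp Z.subtype = a • β (ρ H) ∧ a ≠ 0)) ∧
      (¬ (H ∈ A ∧ ¬ Z ≤ H) → a = 0) := by
    intro H
    by_cases h : H ∈ A ∧ ¬ Z ≤ H
    · obtain ⟨hH, hZH⟩ := h
      have hmem : ρ H ∈ restr A Z := ⟨H, hH, hZH, rfl⟩
      have hkerβ : LinearMap.ker (β (ρ H)) = ρ H := hβ _ hmem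
      have hβne : β (ρ H) ≠ 0 := by
        intro h0
        apply hZH
        intro z hz
        have : (⟨z, hz⟩ : ↥Z) ∈ ρ H := by
          rw [← hkerβ, h0]; simp
        exact ((Submodule.mem_comap.mp this).2 : z ∈ H)
      have hle : LinearMap.ker (β (ρ H)) ≤ LinearMap.ker ((α H).comp Z.subtype) := by
        rw [hkerβ, ← hkerres H hH]
      obtain ⟨a, ha⟩ := aux_smul_of_ker_le _ _ hβne hle
      have hane : a ≠ 0 := by
        intro h0
        apply hZH
        intro z hz
        rw [← hαdef H hH]
        have : (α H).comp Z.subtype = 0 := by rw [ha, h0, zero_smul]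
        have := congrFun (congrArg DFunLike.coe this) ⟨z, hz⟩
        simpa using this
      exact ⟨a, fun _ => ⟨ha, hane⟩, fun h' => absurd ⟨hH, hZH⟩ h'⟩
    · exact ⟨0, fun h' => absurd h' h, fun _ => rfl⟩
  choose lam hlam using hlamex
  have hlamzero : ∀ H : Submodule 𝕂 V, ¬ (H ∈ A ∧ ¬ Z ≤ H) → lam H = 0 :=
    fun H h => (hlam H).2 h
  have hlamspec : ∀ H : Submodule 𝕂 V, H ∈ A → ¬ Z ≤ H →
      ((α H).comp Z.subtype = lam H • β (ρ H) ∧ lam H ≠ 0) :=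
    fun H h1 h2 => (hlam H).1 ⟨h1, h2⟩
  -- the projection map π on relation spaces
  set π : (Submodule 𝕂 V →₀ 𝕂) →ₗ[𝕂] (Submodule 𝕂 ↥Z →₀ 𝕂) :=
    Finsupp.lsum 𝕂 (fun H => lam H • Finsupp.lsingle (ρ H)) with hπ
  have hπsingle : ∀ (H : Submodule 𝕂 V) (a : 𝕂),
      π (Finsupp.single H a) = Finsupp.single (ρ H) (lam H * a) := by
    intro H a
    simp [hπ, Finsupp.lsum_single, Finsupp.smul_single, mul_comm]
  -- key1 : compatibility of π with the linear combinations
  have key1 : ∀ c ∈ Finsupp.supported 𝕂 𝕂 A,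
      Finsupp.linearCombination 𝕂 β (π c) =
        Z.subtype.dualMap (Finsupp.linearCombination 𝕂 α c) := by
    have hsub : Finsupp.supported 𝕂 𝕂 A ≤ LinearMap.ker
        ((Finsupp.linearCombination 𝕂 β).comp π -
          (Z.subtype.dualMap).comp (Finsupp.linearCombination 𝕂 α)) := by
      rw [Finsupp.supported_eq_span_single, Submodule.span_le]
      rintro _ ⟨H, hH, rfl⟩
      simp only [SetLike.mem_coe, LinearMap.mem_ker, LinearMap.sub_apply,
        LinearMap.coe_comp, Function.comp_apply, sub_eq_zero]
      rw [hπsingle, Finsupp.linearCombination_single, Finsupp.linearCombination_single,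
        one_smul, LinearMap.dualMap_apply']
      by_cases hZH : Z ≤ H
      · have h0 : lam H = 0 := hlamzero H (by tauto)
        rw [h0, mul_one, zero_smul]
        ext z
        simp only [LinearMap.coe_comp, Function.comp_apply, LinearMap.zero_apply]
        have : (z : V) ∈ H := hZH z.2
        rw [← hαdef H hH] at this
        exact this.symm ▸ rfl
      · rw [mul_one, ((hlamspec H hH hZH).1).symm]
    intro c hc
    have := hsub hc
    simp only [LinearMap.mem_ker, LinearMap.sub_apply, LinearMap.coe_comp,
      Function.comp_apply, sub_eq_zero] at this
    exact this
  -- key2 : π does not increase support size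
  have key2 : ∀ c : Submodule 𝕂 V →₀ 𝕂, (π c).support.card ≤ c.support.card := by
    intro c
    have hrepr : π c = c.sum fun H a => Finsupp.single (ρ H) (lam H * a) := by
      rw [hπ, Finsupp.lsum_apply]
      refine Finsupp.sum_congr fun H _ => ?_
      simp [Finsupp.smul_single, mul_comm]
    rw [hrepr]
    calc (c.sum fun H a => Finsupp.single (ρ H) (lam H * a)).support.card
        ≤ (c.support.biUnion fun H =>
            (Finsupp.single (ρ H) (lam H * c H)).support).card :=
          Finset.card_le_card Finsupp.support_sum
      _ ≤ ∑ H ∈ c.support, (Finsupp.single (ρ H) (lam H * c H)).support.card :=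
          Finset.card_biUnion_le
      _ ≤ ∑ H ∈ c.support, 1 := Finset.sum_le_sum fun H _ =>
          le_trans (Finset.card_le_card Finsupp.support_single_subset) (by simp)
      _ = c.support.card := by simp
  -- π maps generators to generators, hence relSpace2 A α to relSpace2 (restr A Z) β
  have keysupp : ∀ c ∈ Finsupp.supported 𝕂 𝕂 A, π c ∈ Finsupp.supported 𝕂 𝕂 (restr A Z) := by
    intro c hc
    have hsub : Finsupp.supported 𝕂 𝕂 A ≤
        (Finsupp.supported 𝕂 𝕂 (restr A Z)).comap π := by
      rw [Finsupp.supported_eq_span_single, Submodule.span_le]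
      rintro _ ⟨H, hH, rfl⟩
      simp only [SetLike.mem_coe, Submodule.mem_comap]
      rw [hπsingle]
      by_cases hZH : Z ≤ H
      · have h0 : lam H = 0 := hlamzero H (by tauto)
        rw [h0, zero_mul, Finsupp.single_zero]
        exact Submodule.zero_mem _
      · exact Finsupp.single_mem_supported 𝕂 _ ⟨H, hH, hZH, rfl⟩
    exact hsub hc
  have key3 : Submodule.map π (relSpace2 A α) ≤ relSpace2 (restr A Z) β := by
    rw [relSpace2, Submodule.map_span, Submodule.span_le]
    rintro _ ⟨c, ⟨hcrel, hccard⟩, rfl⟩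
    apply Submodule.subset_span
    obtain ⟨hc1, hc2⟩ := hcrel
    refine ⟨⟨keysupp c hc1, ?_⟩, le_trans (key2 c) hccard⟩
    simp only [SetLike.mem_coe, LinearMap.mem_ker] at hc2 ⊢
    rw [key1 c hc1, hc2, map_zero]
  -- main argument
  refine le_antisymm ?_ ?_
  · rw [relSpace2, Submodule.span_le]
    exact fun c hc => hc.1
  · intro c hc
    simp only [relSpace, Submodule.mem_inf] at hc
    obtain ⟨hc1, hc2⟩ := hc
    -- choose a hyperplane of A above each element of the restriction
    have hHKex : ∀ K : Submodule 𝕂 ↥Z, ∃ H : Submodule 𝕂 V,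
        K ∈ restr A Z → (H ∈ A ∧ ¬ Z ≤ H ∧ K = ρ H) := by
      intro K
      by_cases h : K ∈ restr A Z
      · obtain ⟨H, hH, h1, h2⟩ := h
        exact ⟨H, fun _ => ⟨hH, h1, h2⟩⟩
      · exact ⟨⊥, fun h' => absurd h' h⟩
    choose HK hHK using hHKex
    have hsuppc : ↑c.support ⊆ restr A Z := (Finsupp.mem_supported 𝕂 c).mp hc1
    set r₁ : Submodule 𝕂 V →₀ 𝕂 :=
      c.sum fun K a => Finsupp.single (HK K) (a / lam (HK K)) with hr₁
    have hr₁supp : r₁ ∈ Finsupp.supported 𝕂 𝕂 A := by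
      rw [hr₁, Finsupp.sum]
      refine Submodule.sum_mem _ fun K hK => ?_
      exact Finsupp.single_mem_supported 𝕂 _ (hHK K (hsuppc hK)).1
    have hπr₁ : π r₁ = c := by
      rw [hr₁, map_finsuppSum]
      have heach : ∀ K ∈ c.support,
          π (Finsupp.single (HK K) (c K / lam (HK K))) = Finsupp.single K (c K) := by
        intro K hK
        obtain ⟨hHA, hZH, hKρ⟩ := hHK K (hsuppc hK)
        rw [hπsingle, ← hKρ, mul_div_cancel₀ _ (hlamspec _ hHA hZH).2]
      rw [Finsupp.sum_congr heach]
      exact Finsupp.sum_single c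
    set γ : Module.Dual 𝕂 V := Finsupp.linearCombination 𝕂 α r₁ with hγ
    have hdualzero : Z.subtype.dualMap γ = 0 := by
      have h1 := key1 r₁ hr₁supp
      rw [hπr₁] at h1
      rw [LinearMap.mem_ker] at hc2
      rw [← h1, hc2]
    have hγann : γ ∈ Z.dualAnnihilator := by
      rw [Submodule.mem_dualAnnihilator]
      intro w hw
      have := congrFun (congrArg DFunLike.coe hdualzero) ⟨w, hw⟩
      simpa [LinearMap.dualMap_apply] using this
    have hann_le : Z.dualAnnihilator ≤ Submodule.span 𝕂 (α '' B) := by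
      haveI : Finite ↥B := (hAfin.subset hBA).to_subtype
      rw [hZB, sInf_eq_iInf', Subspace.dualAnnihilator_iInf_eq]
      apply iSup_le
      rintro ⟨H, hH⟩
      have hne : α H ≠ 0 := (hα H (hBA hH)).1
      have hker : LinearMap.ker (α H) = H := (hα H (hBA hH)).2
      calc (H : Submodule 𝕂 V).dualAnnihilator
          = (LinearMap.ker (α H)).dualAnnihilator := by rw [hker]
        _ ≤ Submodule.span 𝕂 {α H} := aux_ann_ker_le_span _ hne
        _ ≤ Submodule.span 𝕂 (α '' B) := Submodule.span_mono
            (Set.singleton_subset_iff.mpr (Set.mem_image_of_mem α hH))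
    obtain ⟨d, hdsupp, hdeq⟩ :=
      (Finsupp.mem_span_image_iff_linearCombination 𝕂).mp (hann_le hγann)
    set r : Submodule 𝕂 V →₀ 𝕂 := r₁ - d with hr
    have hrA : r ∈ Finsupp.supported 𝕂 𝕂 A :=
      Submodule.sub_mem _ hr₁supp (Finsupp.supported_mono hBA hdsupp)
    have hrker : r ∈ LinearMap.ker (Finsupp.linearCombination 𝕂 α) := by
      rw [LinearMap.mem_ker, hr, map_sub, hdeq, ← hγ, sub_self]
    have hπd : π d = 0 := by
      have hd := (Finsupp.mem_supported 𝕂 d).mp hdsupp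
      conv_lhs => rw [← Finsupp.sum_single d]
      rw [map_finsuppSum, Finsupp.sum]
      refine Finset.sum_eq_zero fun H hH => ?_
      have hZH : Z ≤ H := hZB ▸ sInf_le (hd hH)
      rw [hπsingle, hlamzero H (by tauto), zero_mul, Finsupp.single_zero]
    have hπr : π r = c := by rw [hr, map_sub, hπr₁, hπd, sub_zero]
    have hrrel : r ∈ relSpace A α := ⟨hrA, hrker⟩
    rw [← hformal α hαdef] at hrrel
    exact key3 (Submodule.mem_map.mpr ⟨r, hrrel, hπr⟩)
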